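/- Let à be a real k×k matrix whose spectrum (over ℂ) contains no nonzero element of 2πi ℤ. Then the map C ↦ ∫₀¹ e^{Ã(1−s)} C ds from ℝᵏ to ℝᵏ is a linear isomorphism; equivalently, the matrix ∫₀¹ e^{Ãs} ds is invertible. -/

import Mathlib

set_option maxHeartbeats 1000000


open Matrix Complex Real intervalIntegral

attribute [local instance] Matrix.linftyOpNormedRing Matrix.linftyOpNormedAlgebra

namespace Stmt3Aux

variable {k : ℕ}

lemma cont_exp (A : Matrix (Fin k) (Fin k) ℂ) :
    Continuous fun s : ℝ => NormedSpace.exp (s • A) :=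
  NormedSpace.exp_continuous.comp (continuous_id.smul continuous_const)

lemma cont_entry (A : Matrix (Fin k) (Fin k) ℂ) (i j : Fin k) :
    Continuous fun s : ℝ => NormedSpace.exp (s • A) i j :=
  (continuous_apply j).comp ((continuous_apply i).comp (cont_exp A))

lemma mulVec_int (f : ℝ → Matrix (Fin k) (Fin k) ℂ)
    (hf : ∀ i j, Continuous fun s => f s i j) (v : Fin k → ℂ) (i : Fin k) :
    ((Matrix.of fun i j => ∫ s in (0:ℝ)..1, f s i j).mulVec v) i
      = ∫ s in (0:ℝ)..1, ((f s).mulVec v) i := by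
  simp only [Matrix.mulVec, dotProduct, Matrix.of_apply]
  simp_rw [← intervalIntegral.integral_mul_const]
  rw [← intervalIntegral.integral_finset_sum
    (f := fun j s => f s i j * v j)
    (fun j _ => ((hf i j).mul continuous_const).intervalIntegrable _ _)]

lemma cont_mulVec (A : Matrix (Fin k) (Fin k) ℂ) (x : Fin k → ℂ) (j : Fin k) :
    Continuous fun s : ℝ => ((NormedSpace.exp (s • A)).mulVec x) j := by
  simp only [Matrix.mulVec, dotProduct]
  exact continuous_finset_sum _ fun l _ => (cont_entry A j l).mul continuous_const

lemma exp_mulVec (M : Matrix (Fin k) (Fin k) ℂ) (w : Fin k → ℂ) (μ : ℂ)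
    (hw : M.mulVec w = μ • w) :
    (NormedSpace.exp M).mulVec w = Complex.exp μ • w := by
  have hpow : ∀ n : ℕ, (M ^ n).mulVec w = μ ^ n • w := by
    intro n
    induction n with
    | zero => simp
    | succ n ih =>
      rw [pow_succ, ← Matrix.mulVec_mulVec, hw, Matrix.mulVec_smul, ih, smul_smul, pow_succ,
        mul_comm]
  let L : Matrix (Fin k) (Fin k) ℂ →ₗ[ℝ] (Fin k → ℂ) :=
    { toFun := fun N => N.mulVec w
      map_add' := fun a b => Matrix.add_mulVec a b w
      map_smul' := fun r a => Matrix.smul_mulVec r a w }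
  have hL : Continuous L := L.continuous_of_finiteDimensional
  have hsum := NormedSpace.expSeries_summable' (𝕂 := ℝ) M
  have h1 : (NormedSpace.exp M).mulVec w
      = ∑' n : ℕ, L (((n.factorial : ℝ)⁻¹) • M ^ n) := by
    rw [NormedSpace.exp_eq_tsum ℝ]
    exact ((hsum.hasSum.map L.toAddMonoidHom hL).tsum_eq).symm
  rw [h1]
  have h2 : ∀ n : ℕ, L (((n.factorial : ℝ)⁻¹) • M ^ n)
      = (((n.factorial : ℝ)⁻¹) • μ ^ n) • w := by
    intro n
    have := L.map_smul ((n.factorial : ℝ)⁻¹) (M ^ n)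
    simp only [L, LinearMap.coe_mk, AddHom.coe_mk] at this ⊢
    rw [this, hpow n, smul_assoc]
  simp_rw [h2]
  rw [(NormedSpace.expSeries_summable' (𝕂 := ℝ) μ).tsum_smul_const]
  congr 1
  have : ∑' n : ℕ, ((n.factorial : ℝ)⁻¹) • μ ^ n = NormedSpace.exp μ := by
    rw [NormedSpace.exp_eq_tsum ℝ]
  rw [this, ← Complex.exp_eq_exp_ℂ]

lemma exp_map (A : Matrix (Fin k) (Fin k) ℝ) (s : ℝ) :
    NormedSpace.exp (s • A.map (algebraMap ℝ ℂ))
      = (NormedSpace.exp (s • A)).map (algebraMap ℝ ℂ) := by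
  have hcont : Continuous fun M : Matrix (Fin k) (Fin k) ℝ => M.map (algebraMap ℝ ℂ) :=
    continuous_pi fun i => continuous_pi fun j =>
      Complex.continuous_ofReal.comp ((continuous_apply j).comp (continuous_apply i))
  have h := NormedSpace.map_exp
    ((algebraMap ℝ ℂ).mapMatrix : Matrix (Fin k) (Fin k) ℝ →+* Matrix (Fin k) (Fin k) ℂ)
    hcont (s • A)
  have hsm : ((algebraMap ℝ ℂ).mapMatrix (s • A) : Matrix (Fin k) (Fin k) ℂ)
      = s • A.map (algebraMap ℝ ℂ) := by
    ext i j
    simp [Matrix.map_apply, Complex.real_smul, smul_eq_mul]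
  rw [hsm] at h
  exact h.symm

lemma key (At : Matrix (Fin k) (Fin k) ℝ)
    (hspec : ∀ m : ℤ, m ≠ 0 →
      (2 * Real.pi * Complex.I * (m : ℂ)) ∉ spectrum ℂ (At.map (algebraMap ℝ ℂ))) :
    IsUnit (Matrix.of fun i j : Fin k =>
      ∫ s in (0:ℝ)..1, NormedSpace.exp (s • At) i j) := by
  set Ac : Matrix (Fin k) (Fin k) ℂ := At.map (algebraMap ℝ ℂ) with hAc
  set B : Matrix (Fin k) (Fin k) ℝ :=
    Matrix.of fun i j => ∫ s in (0:ℝ)..1, NormedSpace.exp (s • At) i j with hB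
  set Bc : Matrix (Fin k) (Fin k) ℂ :=
    Matrix.of fun i j => ∫ s in (0:ℝ)..1, NormedSpace.exp (s • Ac) i j with hBcdef
  have hBc : Bc = B.map (algebraMap ℝ ℂ) := by
    ext i j
    simp only [hBcdef, hB, hAc, Matrix.of_apply, Matrix.map_apply]
    simp_rw [exp_map, Matrix.map_apply]
    exact intervalIntegral.integral_ofReal
  rw [Matrix.isUnit_iff_isUnit_det, isUnit_iff_ne_zero]
  intro hdet
  have hdetc : Bc.det = 0 := by
    rw [hBc, show B.map ⇑(algebraMap ℝ ℂ) = (algebraMap ℝ ℂ).mapMatrix B from rfl,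
      ← RingHom.map_det, hdet, map_zero]
  obtain ⟨v, hv0, hv⟩ := (Matrix.exists_mulVec_eq_zero_iff).2 hdetc
  set K : Submodule ℂ (Fin k → ℂ) := LinearMap.ker Bc.mulVecLin with hK
  have hvK : v ∈ K := LinearMap.mem_ker.mpr (by simpa [Matrix.mulVecLin_apply] using hv)
  haveI : Nontrivial K := nontrivial_of_ne ⟨v, hvK⟩ 0 (by
    simp only [ne_eq, Submodule.mk_eq_zero]
    exact hv0)
  -- K is invariant under Ac
  have hKinv : ∀ x ∈ K, Ac.mulVecLin x ∈ K := by
    intro x hx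
    rw [hK, LinearMap.mem_ker] at hx ⊢
    simp only [Matrix.mulVecLin_apply] at hx ⊢
    funext i
    have h1 : (Bc.mulVec (Ac.mulVec x)) i
        = ∫ s in (0:ℝ)..1, ((NormedSpace.exp (s • Ac)).mulVec (Ac.mulVec x)) i :=
      mulVec_int _ (cont_entry Ac) _ i
    have hcomm : ∀ s : ℝ, NormedSpace.exp (s • Ac) * Ac = Ac * NormedSpace.exp (s • Ac) :=
      fun s => ((Commute.refl Ac).smul_left s).exp_left
    have h2 : ∀ s : ℝ, ((NormedSpace.exp (s • Ac)).mulVec (Ac.mulVec x)) i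
        = ∑ j, Ac i j * ((NormedSpace.exp (s • Ac)).mulVec x) j := by
      intro s
      rw [Matrix.mulVec_mulVec, hcomm s, ← Matrix.mulVec_mulVec]
      simp [Matrix.mulVec, dotProduct]
    simp_rw [h1, h2]
    rw [intervalIntegral.integral_finset_sum
      (f := fun j s => Ac i j * ((NormedSpace.exp (s • Ac)).mulVec x) j)
      (fun j _ => (continuous_const.mul (cont_mulVec Ac x j)).intervalIntegrable _ _)]
    have h3 : ∀ j, ∫ s in (0:ℝ)..1, Ac i j * ((NormedSpace.exp (s • Ac)).mulVec x) j
        = Ac i j * (Bc.mulVec x) j := by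
      intro j
      rw [intervalIntegral.integral_const_mul, ← mulVec_int _ (cont_entry Ac) x j]
    simp_rw [h3, hx]
    simp only [Pi.zero_apply, mul_zero, Finset.sum_const_zero]
  set T : Module.End ℂ K := (Ac.mulVecLin).restrict hKinv with hT
  obtain ⟨μ, hμ⟩ := Module.End.exists_eigenvalue T
  obtain ⟨w', hw'⟩ := hμ.exists_hasEigenvector
  set w : Fin k → ℂ := (w' : Fin k → ℂ) with hwdef
  have hw0 : w ≠ 0 := by
    intro h
    exact hw'.2 (by exact_mod_cast Submodule.coe_eq_zero.mp h)
  have hwA : Ac.mulVec w = μ • w := by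
    have := congrArg (Subtype.val) hw'.apply_eq_smul
    simpa [hT, LinearMap.restrict_apply, Matrix.mulVecLin_apply] using this
  have hwB : Bc.mulVec w = 0 := LinearMap.mem_ker.mp w'.2
  -- compute Bc.mulVec w
  have hint : ∀ i, (Bc.mulVec w) i = (∫ s in (0:ℝ)..1, Complex.exp (s * μ)) * w i := by
    intro i
    rw [mulVec_int _ (cont_entry Ac) w i]
    have h4 : ∀ s : ℝ, ((NormedSpace.exp (s • Ac)).mulVec w) i
        = Complex.exp ((s : ℂ) * μ) * w i := by
      intro s
      have hsw : (s • Ac).mulVec w = ((s : ℂ) * μ) • w := by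
        rw [Matrix.smul_mulVec, hwA, ← Complex.real_smul, smul_assoc]
      rw [exp_mulVec _ _ _ hsw]
      simp [smul_eq_mul]
    simp_rw [h4]
    rw [intervalIntegral.integral_mul_const]
  obtain ⟨i, hi⟩ := Function.ne_iff.mp hw0
  have hI : (∫ s in (0:ℝ)..1, Complex.exp (s * μ)) = 0 := by
    have := hint i
    rw [hwB] at this
    simp only [Pi.zero_apply] at this
    rcases mul_eq_zero.mp this.symm with h | h
    · exact h
    · exact absurd h hi
  -- evaluate the integral
  have hμspec : μ ∈ spectrum ℂ Ac := by
    rw [← AlgEquiv.spectrum_eq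
      (Matrix.toLinAlgEquiv' : Matrix (Fin k) (Fin k) ℂ ≃ₐ[ℂ] _) Ac,
      ← Module.End.hasEigenvalue_iff_mem_spectrum]
    exact Module.End.hasEigenvalue_of_hasEigenvector
      ⟨Module.End.mem_eigenspace_iff.mpr (by simpa [Matrix.toLinAlgEquiv'_apply] using hwA), hw0⟩
  by_cases hμ0 : μ = 0
  · rw [hμ0] at hI
    simp at hI
  · have : (∫ s in (0:ℝ)..1, Complex.exp (μ * s)) = 0 := by
      rw [← hI]
      congr 1
      ext s
      rw [mul_comm]
    rw [integral_exp_mul_complex hμ0] at this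
    have hexp : Complex.exp μ = 1 := by
      rw [div_eq_zero_iff] at this
      rcases this with h | h
      · simpa [sub_eq_zero] using h
      · exact absurd h hμ0
    obtain ⟨n, hn⟩ := Complex.exp_eq_one_iff.mp hexp
    have hn0 : n ≠ 0 := by
      intro h
      rw [h] at hn
      simp at hn
      exact hμ0 hn
    have heqμ : (2 * (Real.pi : ℂ) * Complex.I * (n : ℂ)) = μ := by rw [hn]; ring
    rw [← heqμ] at hμspec
    exact hspec n hn0 hμspec

end Stmt3Aux

/-- If the (complex) spectrum of a real `k×k` matrix `Ã` contains no nonzero element of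
`2πi ℤ`, then `C ↦ ∫₀¹ e^{Ã(1−s)} C ds` is a linear isomorphism of `ℝᵏ`; equivalently,
the (entrywise) integral matrix `∫₀¹ e^{Ãs} ds` is invertible. -/
theorem stmt3 {k : ℕ} (At : Matrix (Fin k) (Fin k) ℝ)
    (hspec : ∀ m : ℤ, m ≠ 0 →
      (2 * Real.pi * Complex.I * (m : ℂ)) ∉ spectrum ℂ (At.map (algebraMap ℝ ℂ))) :
    Function.Bijective
      (fun C : Fin k → ℝ =>
        (Matrix.of fun i j =>
          ∫ s in (0:ℝ)..1, NormedSpace.exp ((1 - s) • At) i j).mulVec C) ∧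
    IsUnit (Matrix.of fun i j : Fin k =>
      ∫ s in (0:ℝ)..1, NormedSpace.exp (s • At) i j) := by
  have hkey := Stmt3Aux.key At hspec
  have heq : (Matrix.of fun i j : Fin k =>
        ∫ s in (0:ℝ)..1, NormedSpace.exp ((1 - s) • At) i j)
      = (Matrix.of fun i j : Fin k =>
        ∫ s in (0:ℝ)..1, NormedSpace.exp (s • At) i j) := by
    ext i j
    simp only [Matrix.of_apply]
    have := intervalIntegral.integral_comp_sub_left (a := (0:ℝ)) (b := 1)
      (fun s => NormedSpace.exp (s • At) i j) 1
    simpa using this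
  refine ⟨?_, hkey⟩
  rw [heq]
  obtain ⟨u, hu⟩ := hkey
  have h1 : (u : Matrix (Fin k) (Fin k) ℝ) * (↑u⁻¹ : Matrix (Fin k) (Fin k) ℝ) = 1 := u.mul_inv
  have h2 : (↑u⁻¹ : Matrix (Fin k) (Fin k) ℝ) * (u : Matrix (Fin k) (Fin k) ℝ) = 1 := u.inv_mul
  rw [Function.bijective_iff_has_inverse]
  refine ⟨fun C => (↑u⁻¹ : Matrix (Fin k) (Fin k) ℝ).mulVec C, fun C => ?_, fun C => ?_⟩
  · simp only [Matrix.mulVec_mulVec, ← hu, h2, Matrix.one_mulVec]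
  · simp only [Matrix.mulVec_mulVec, ← hu, h1, Matrix.one_mulVec]
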